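/- For every node a belonging to V, the set Vstar(a) computed by the recurrences is feasible for subtree(a): Vstar(a) ⊆ V ∩ subtree(a) and every V-leaf lying in subtree(a) has an ancestor-or-self belonging to Vstar(a). (This is the coverage claim of Theorem 1: the selected nodes collectively cover all spatial objects associated with nodes in V.) -/

import Mathlib

/-!
Theorem 1 of "STREAK": coverage/feasibility of the set `Vstar(a)` computed by
the dynamic-programming recurrences.

Nodes of a finite rooted tree are represented by paths (lists of child indices)
from the root.
-/

open scoped Classical

/-- A finite rooted tree: each node has a finite list of children. -/
inductive RTree : Type where
  | node : List RTree → RTree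

namespace RTree

/-- The subtree reached by following a path of child indices, if it exists. -/
def subAt : RTree → List ℕ → Option RTree
  | t, [] => some t
  | node cs, i :: p =>
    match cs[i]? with
    | some c => subAt c p
    | none => none
termination_by t p => p.length

/-- A path is a node of the tree if following it leads to a subtree. -/
def valid (t : RTree) (p : List ℕ) : Prop := (t.subAt p).isSome

/-- `subtreeOf t p` is the set of nodes of `t` consisting of `p` together with
all of its descendants (nodes whose path extends `p`). -/
def subtreeOf (t : RTree) (p : List ℕ) : Set (List ℕ) :=
  {q | t.valid q ∧ p <+: q}

/-- A node `p ∈ V` is a `V`-leaf if no child of `p` belongs to `V`. -/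
def VLeaf (t : RTree) (V : Set (List ℕ)) (p : List ℕ) : Prop :=
  p ∈ V ∧ t.valid p ∧ ∀ i : ℕ, p ++ [i] ∉ V

/-- `S` is feasible for the subtree rooted at `p`: `S ⊆ V ∩ subtree(p)` and
every `V`-leaf lying in `subtree(p)` has an ancestor-or-self, itself lying in
`subtree(p)`, that belongs to `S`. -/
def Feasible (t : RTree) (V : Set (List ℕ)) (p : List ℕ) (S : Set (List ℕ)) : Prop :=
  S ⊆ V ∩ subtreeOf t p ∧
  ∀ q, VLeaf t V q → q ∈ subtreeOf t p →
    ∃ r ∈ S, r ∈ subtreeOf t p ∧ r <+: q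

/-- The dynamic program of Theorem 1: for the subtree rooted at path `p`,
compute `(Vstar p, sigma p, xistar p)` by the recurrences.  If `p ∉ V` the
value is `(∅, 0, 0)`; if `p` is a `V`-leaf (no child in `V`) it is
`({p}, cost p, xi p)`; otherwise, with `γ` the children of `p` belonging to
`V`, `μ = Σ_{j ∈ γ} xistar j` if `|γ| > 1` and `0` otherwise, the value is
`({p}, cost p, xi p)` when `cost p < μ + Σ_{j ∈ γ} sigma j`, and
`(⋃_{j ∈ γ} Vstar j, Σ_{j ∈ γ} sigma j + μ, Σ_{j ∈ γ} xistar j)` otherwise. -/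
noncomputable def dp (V : Set (List ℕ)) (cost xi : List ℕ → ℝ) :
    RTree → List ℕ → Set (List ℕ) × ℝ × ℝ
  | node cs, p =>
    let recs := (cs.zipIdx.map Prod.swap).attach.map fun x =>
      (p ++ [x.1.1], dp V cost xi x.1.2 (p ++ [x.1.1]))
    if p ∈ V then
      let γ := recs.filter fun r => decide (r.1 ∈ V)
      if γ.isEmpty then ({p}, cost p, xi p)
      else
        let σsum := (γ.map fun r => r.2.2.1).sum
        let ξsum := (γ.map fun r => r.2.2.2).sum
        let μ := if 1 < γ.length then ξsum else 0
        if cost p < μ + σsum then ({p}, cost p, xi p)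
        else (⋃ r ∈ γ, r.2.1, σsum + μ, ξsum)
    else (∅, 0, 0)
termination_by t _ => sizeOf t
decreasing_by
  simp_wf
  have hx : x.1.2 ∈ cs := by
    have h1 : x.1.2 ∈ (cs.zipIdx.map Prod.swap).map Prod.snd := List.mem_map_of_mem x.2
    simpa [List.map_map, Function.comp_def] using h1
  have := List.sizeOf_lt_of_mem hx
  omega

/-- `Vstar a`, for a node `a` of the tree `t`. -/
noncomputable def VstarAt (t : RTree) (V : Set (List ℕ)) (cost xi : List ℕ → ℝ)
    (p : List ℕ) : Set (List ℕ) :=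
  match t.subAt p with
  | some s => (dp V cost xi s p).1
  | none => ∅

end RTree

open RTree

lemma prefix_mem_V_aux (V : Set (List ℕ))
    (hanc : ∀ (p : List ℕ) (i : ℕ), p ++ [i] ∈ V → p ∈ V) :
    ∀ (s r : List ℕ), r ++ s ∈ V → r ∈ V := by
  intro s
  induction s using List.reverseRecOn with
  | nil => intro r h; simpa using h
  | append_singleton s' i ih =>
    intro r h
    exact ih r (hanc (r ++ s') i (by simpa [List.append_assoc] using h))

lemma subAt_append : ∀ (p : List ℕ) (t : RTree) (q : List ℕ),
    subAt t (p ++ q) = (subAt t p).bind (fun s => subAt s q)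
  | [], t, q => by simp [RTree.subAt]
  | i :: p, RTree.node cs, q => by
    simp only [List.cons_append, RTree.subAt]
    cases cs[i]? with
    | none => simp
    | some c => simpa using subAt_append p c q

lemma subtreeOf_mono (t : RTree) {p q : List ℕ} (h : p <+: q) :
    subtreeOf t q ⊆ subtreeOf t p := by
  rintro r ⟨hv, hpre⟩
  exact ⟨hv, h.trans hpre⟩

lemma streak_dp_main (t : RTree) (V : Set (List ℕ)) (cost xi : List ℕ → ℝ)
    (hanc : ∀ (p : List ℕ) (i : ℕ), p ++ [i] ∈ V → p ∈ V) :
    ∀ (n : ℕ) (s : RTree) (p : List ℕ), sizeOf s ≤ n → t.subAt p = some s →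
      p ∈ V → Feasible t V p (dp V cost xi s p).1 := by
  intro n
  induction n with
  | zero =>
    rintro ⟨cs⟩ p hsz
    simp at hsz
  | succ n ih =>
    rintro ⟨cs⟩ p hsz hsub hpV
    have hvalidp : t.valid p := by simp [RTree.valid, hsub]
    -- notation for the recursive structure of dp
    set recs := ((cs.zipIdx.map Prod.swap).attach.map fun x =>
      (p ++ [x.1.1], dp V cost xi x.1.2 (p ++ [x.1.1]))) with hrecs
    set γ := recs.filter (fun r => decide (r.1 ∈ V)) with hγ
    have hmem_recs : ∀ r, r ∈ recs ↔ ∃ i c, cs[i]? = some c ∧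
        r = (p ++ [i], dp V cost xi c (p ++ [i])) := by
      intro r
      constructor
      · intro hr
        rw [hrecs, List.mem_map] at hr
        obtain ⟨x, _, rfl⟩ := hr
        obtain ⟨⟨i, c⟩, hx⟩ := x
        exact ⟨i, c, by
          obtain ⟨⟨c', i'⟩, h, he⟩ := List.mem_map.mp hx
          simp only [Prod.swap_prod_mk, Prod.mk.injEq] at he
          obtain ⟨rfl, rfl⟩ := he
          exact List.mk_mem_zipIdx_iff_getElem?.mp h, rfl⟩
      · rintro ⟨i, c, hc, rfl⟩
        rw [hrecs, List.mem_map]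
        exact ⟨⟨(i, c), List.mem_map.mpr ⟨(c, i), List.mk_mem_zipIdx_iff_getElem?.mpr hc, rfl⟩⟩, List.mem_attach _ _, rfl⟩
    -- feasibility for children in V, via the induction hypothesis
    have hchild : ∀ i c, cs[i]? = some c → p ++ [i] ∈ V →
        Feasible t V (p ++ [i]) (dp V cost xi c (p ++ [i])).1 := by
      intro i c hc hiV
      have hcmem : c ∈ cs := by
        have h1 : c ∈ (cs.zipIdx.map Prod.swap).map Prod.snd :=
          List.mem_map_of_mem (List.mem_map.mpr ⟨(c, i), List.mk_mem_zipIdx_iff_getElem?.mpr hc, rfl⟩)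
        simpa [List.map_map, Function.comp_def] using h1
      have hszc : sizeOf c ≤ n := by
        have := List.sizeOf_lt_of_mem hcmem
        simp at hsz
        omega
      have hsubc : t.subAt (p ++ [i]) = some c := by
        rw [subAt_append, hsub]
        simp [RTree.subAt, hc]
      exact ih c (p ++ [i]) hszc hsubc hiV
    have hsingle : Feasible t V p ({p} : Set (List ℕ)) := by
      refine ⟨?_, ?_⟩
      · rw [Set.singleton_subset_iff]
        exact ⟨hpV, hvalidp, List.prefix_refl p⟩
      · intro q _ hq
        exact ⟨p, rfl, ⟨hvalidp, List.prefix_refl p⟩, hq.2⟩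
    have hunion : ¬ γ.isEmpty → Feasible t V p (⋃ r ∈ γ, r.2.1) := by
      intro hne
      have hγmem : ∀ r ∈ γ, ∃ i c, cs[i]? = some c ∧ p ++ [i] ∈ V ∧
          r = (p ++ [i], dp V cost xi c (p ++ [i])) := by
        intro r hr
        rw [hγ, List.mem_filter] at hr
        obtain ⟨i, c, hc, rfl⟩ := (hmem_recs r).mp hr.1
        exact ⟨i, c, hc, by simpa using hr.2, rfl⟩
      constructor
      · intro y hy
        simp only [Set.mem_iUnion] at hy
        obtain ⟨r, hr, hy⟩ := hy
        obtain ⟨i, c, hc, hiV, rfl⟩ := hγmem r hr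
        have := (hchild i c hc hiV).1 hy
        exact ⟨this.1, subtreeOf_mono t (List.prefix_append p [i]) this.2⟩
      · intro q hql hq
        obtain ⟨hqv, l, rfl⟩ := hq
        -- q = p ++ l with l ≠ [] (else p is a V-leaf, contradicting γ ≠ ∅)
        cases l with
        | nil =>
          exfalso
          rw [List.isEmpty_iff] at hne
          obtain ⟨r, hr⟩ := List.exists_mem_of_ne_nil γ (by intro h; exact hne h)
          obtain ⟨i, c, _, hiV, _⟩ := hγmem r hr
          exact hql.2.2 i (by simpa using hiV)
        | cons i l' =>
          have hqeq : p ++ i :: l' = (p ++ [i]) ++ l' := by simp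
          have hiV : p ++ [i] ∈ V := by
            apply prefix_mem_V_aux V hanc l'
            rw [← hqeq]; exact hql.1
          -- p ++ [i] is valid, so cs[i]? = some c for some c
          have hvi : (t.subAt (p ++ [i])).isSome := by
            have : (t.subAt (p ++ i :: l')).isSome := hqv
            rw [hqeq, subAt_append] at this
            cases h : t.subAt (p ++ [i]) with
            | none => rw [h] at this; simp at this
            | some _ => simp
          rw [subAt_append, hsub] at hvi
          cases hc : cs[i]? with
          | none => exfalso; simp [RTree.subAt, hc] at hvi
          | some c =>
            have hF := hchild i c hc hiV
            have hqmem : p ++ i :: l' ∈ subtreeOf t (p ++ [i]) :=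
              ⟨hqv, by rw [hqeq]; exact ⟨l', rfl⟩⟩
            obtain ⟨r, hrS, hrsub, hrpre⟩ := hF.2 _ hql hqmem
            refine ⟨r, ?_, subtreeOf_mono t ⟨[i], rfl⟩ hrsub, hrpre⟩
            simp only [Set.mem_iUnion]
            refine ⟨(p ++ [i], dp V cost xi c (p ++ [i])), ?_, hrS⟩
            rw [hγ, List.mem_filter]
            exact ⟨(hmem_recs _).mpr ⟨i, c, hc, rfl⟩, by simpa using hiV⟩
    -- now unfold dp and case on the branches
    rw [dp]
    simp only [← hrecs, ← hγ, if_pos hpV]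
    by_cases hγe : γ.isEmpty
    · rw [if_pos hγe]
      exact hsingle
    · rw [if_neg hγe]
      by_cases hlt : cost p < (if 1 < γ.length then (γ.map fun r => r.2.2.2).sum else 0)
          + (γ.map fun r => r.2.2.1).sum
      · rw [if_pos hlt]
        exact hsingle
      · rw [if_neg hlt]
        exact hunion hγe

open RTree in
/-- For every node `a ∈ V`, the set `Vstar(a)` computed by the recurrences is
feasible for `subtree(a)`: `Vstar(a) ⊆ V ∩ subtree(a)` and every `V`-leaf lying
in `subtree(a)` has an ancestor-or-self belonging to `Vstar(a)` (the coverage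
claim of Theorem 1). -/
theorem streak_dp_feasible
    (t : RTree) (V : Set (List ℕ)) (cost xi : List ℕ → ℝ)
    (hVnodes : ∀ p ∈ V, t.valid p)
    (hanc : ∀ (p : List ℕ) (i : ℕ), p ++ [i] ∈ V → p ∈ V)
    (hcost : ∀ p, 0 ≤ cost p) (hxi : ∀ p, 0 ≤ xi p) :
    ∀ a : List ℕ, t.valid a → a ∈ V →
      Feasible t V a (VstarAt t V cost xi a) := by
  intro a hva haV
  have hsome := hva
  rw [RTree.valid, Option.isSome_iff_exists] at hsome
  obtain ⟨s, hs⟩ := hsome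
  have := streak_dp_main t V cost xi hanc (sizeOf s) s a le_rfl hs haV
  simpa [VstarAt, hs] using this
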